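/- Let ε ∈ (0,1] and let x, a, b ≥ 0 satisfy x ≤ a·x^{1/(1+ε)} + b. Then x ≤ a^{(1+ε)/ε} + ((1+ε)/ε)·b. -/

import Mathlib

theorem self_bounding_rpow (ε x a b : ℝ) (hε : ε ∈ Set.Ioc (0 : ℝ) 1)
    (hx : 0 ≤ x) (ha : 0 ≤ a) (hb : 0 ≤ b)
    (h : x ≤ a * x ^ ((1 : ℝ) / (1 + ε)) + b) :
    x ≤ a ^ ((1 + ε) / ε) + ((1 + ε) / ε) * b := by
  obtain ⟨hε0, hε1⟩ := hε
  have h1ε : (0:ℝ) < 1 + ε := by linarith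
  have hconj : ((1 + ε) / ε).HolderConjugate (1 + ε) := by
    rw [Real.holderConjugate_iff]
    constructor
    · rw [lt_div_iff₀ hε0]; linarith
    · field_simp; ring
  have hy : a * x ^ ((1 : ℝ) / (1 + ε)) ≤
      a ^ ((1 + ε) / ε) / ((1 + ε) / ε) + (x ^ ((1 : ℝ) / (1 + ε))) ^ (1 + ε) / (1 + ε) :=
    Real.young_inequality_of_nonneg ha (Real.rpow_nonneg hx _) hconj
  have hxx : (x ^ ((1 : ℝ) / (1 + ε))) ^ (1 + ε) = x := by
    rw [← Real.rpow_mul hx]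
    field_simp
    simp
  rw [hxx] at hy
  have key : x ≤ a ^ ((1 + ε) / ε) / ((1 + ε) / ε) + x / (1 + ε) + b := by linarith
  have hA : 0 ≤ a ^ ((1 + ε) / ε) := Real.rpow_nonneg ha _
  rw [div_div_eq_mul_div] at key
  have key2 := mul_le_mul_of_nonneg_right key h1ε.le
  rw [add_mul, add_mul, div_mul_cancel₀ _ h1ε.ne', div_mul_cancel₀ _ h1ε.ne'] at key2
  have hdc : (1 + ε) / ε * b * ε = (1 + ε) * b := by field_simp
  rw [← mul_le_mul_iff_of_pos_right hε0, add_mul, hdc]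
  nlinarith [key2]
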